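/- For all partial multifunctions f,g on ℕ with g computably transparent, f ≤_m g if and only if f ≤_W g. Moreover, every partial multifunction f is Weihrauch equivalent to the computably transparent partial multifunction Weih_f (f ≤_W Weih_f and Weih_f ≤_W f). Hence the poset of many-one degrees of computably transparent partial multifunctions on ℕ is isomorphic to the Weihrauch degrees of partial multifunctions on ℕ. -/

import Mathlib

namespace KleeneOracle

/-- `e ∗ x`: application of the `e`-th partial computable function on ℕ. -/
def ap (e x : ℕ) : Part ℕ :=
  Nat.Partrec.Code.eval (Denumerable.ofNat Nat.Partrec.Code e) x

/-- `e ∗ A := {e ∗ a : a ∈ A}`. -/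
def apSet (e : ℕ) (A : Set ℕ) : Set ℕ := {z | ∃ a ∈ A, z ∈ ap e a}

/-- A partial multifunction on ℕ. -/
abbrev Multifun := ℕ → Part (Set ℕ)

def Transparent (U : Multifun) : Prop :=
  ∃ u : ℕ, ∀ (e x : ℕ) (A : Set ℕ), A ∈ U x → (∀ y ∈ A, (ap e y).Dom) →
    ∃ c ∈ ap u e, ∃ d ∈ ap c x, ∃ B ∈ U d, B ⊆ apSet e A

def Inflationary (U : Multifun) : Prop :=
  ∃ η : ℕ, ∀ x : ℕ, ∃ c ∈ ap η x, ∃ B ∈ U c, B ⊆ {x}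

def mcomp (g f : Multifun) : Multifun := fun x =>
  ⟨∃ A ∈ f x, ∀ y ∈ A, (g y).Dom,
   fun _ => {z | ∃ A ∈ f x, ∃ y ∈ A, ∃ B ∈ g y, z ∈ B}⟩

def Idempotent (U : Multifun) : Prop :=
  ∃ μ : ℕ, ∀ (x : ℕ) (A : Set ℕ), A ∈ mcomp U U x →
    ∃ c ∈ ap μ x, ∃ B ∈ U c, B ⊆ A

def mRed (f g : Multifun) : Prop :=
  ∃ e : ℕ, ∀ (x : ℕ) (A : Set ℕ), A ∈ f x →
    ∃ c ∈ ap e x, ∃ B ∈ g c, B ⊆ A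

def wRed (f g : Multifun) : Prop :=
  ∃ em ep : ℕ, ∀ (x : ℕ) (A : Set ℕ), A ∈ f x →
    ∃ c ∈ ap em x, ∃ B ∈ g c, ∀ y ∈ B, ∃ z ∈ ap ep (Nat.pair x y), z ∈ A

def Weih (g : Multifun) : Multifun := fun w =>
  ⟨∃ c ∈ ap w.unpair.1 w.unpair.2.unpair.2, ∃ B ∈ g c,
     ∀ y ∈ B, (ap w.unpair.2.unpair.1 (Nat.pair w.unpair.2.unpair.2 y)).Dom,
   fun _ => {z | ∃ c ∈ ap w.unpair.1 w.unpair.2.unpair.2, ∃ B ∈ g c,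
     ∃ y ∈ B, z ∈ ap w.unpair.2.unpair.1 (Nat.pair w.unpair.2.unpair.2 y)}⟩

def idsq (g : Multifun) : Multifun := fun w =>
  if w.unpair.1 = 0 then Part.some {w.unpair.2}
  else if w.unpair.1 = 1 then g w.unpair.2
  else Part.none

def pWeih (g : Multifun) : Multifun := Weih (idsq g)

def pwRed (f g : Multifun) : Prop := wRed f (idsq g)

def Med (Q : Set ℕ) : Multifun := fun e =>
  ⟨∀ a ∈ Q, (ap e a).Dom, fun _ => apSet e Q⟩

def MedRed (P Q : Set ℕ) : Prop :=
  ∃ e : ℕ, (∀ a ∈ Q, (ap e a).Dom) ∧ apSet e Q ⊆ P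

def constMF (P : Set ℕ) : Multifun := fun _ => Part.some P

def imp (p q : Set ℕ) : Set ℕ := {e | ∀ x ∈ p, ∃ z ∈ ap e x, z ∈ q}

def OpMonotone (j : Set ℕ → Set ℕ) : Prop :=
  ∃ u : ℕ, ∀ p q : Set ℕ, ∀ a ∈ imp p q, ∃ c ∈ ap u a, c ∈ imp (j p) (j q)

def OpInflationary (j : Set ℕ → Set ℕ) : Prop :=
  ∃ e : ℕ, ∀ p : Set ℕ, e ∈ imp p (j p)

def OpIdempotent (j : Set ℕ → Set ℕ) : Prop :=
  ∃ e : ℕ, ∀ p : Set ℕ, e ∈ imp (j (j p)) (j p)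

def LawvereTierney (j : Set ℕ → Set ℕ) : Prop :=
  OpMonotone j ∧ OpInflationary j ∧ OpIdempotent j

def jU (U : Multifun) (p : Set ℕ) : Set ℕ := {x | ∃ A ∈ U x, A ⊆ p}

def SingleValued (U : Multifun) : Prop := ∀ x : ℕ, ∀ A ∈ U x, ∃ y : ℕ, A = {y}

def presInter (j : Set ℕ → Set ℕ) : Prop :=
  ∀ (ι : Type) [Nonempty ι] (p : ι → Set ℕ), j (⋂ i, p i) = ⋂ i, j (p i)

def presUnion (j : Set ℕ → Set ℕ) : Prop :=
  ∀ (ι : Type) (p : ι → Set ℕ), j (⋃ i, p i) = ⋃ i, j (p i)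

def Uop (j : Set ℕ → Set ℕ) : Multifun := fun x =>
  ⟨∃ p : Set ℕ, x ∈ j p, fun _ => ⋂₀ {p : Set ℕ | x ∈ j p}⟩

def mMorphism (e : ℕ) (f g : Multifun) : Prop :=
  ∀ (x : ℕ) (A : Set ℕ), A ∈ f x → ∃ c ∈ ap e x, ∃ B ∈ g c, B ⊆ A

def rMorphism (e : ℕ) (j k : Set ℕ → Set ℕ) : Prop :=
  ∀ p : Set ℕ, e ∈ imp (j p) (k p)

def rRed (j k : Set ℕ → Set ℕ) : Prop := ∃ e : ℕ, rMorphism e j k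


section Aux

open Nat.Partrec Nat.Partrec.Code

lemma ap_encode' (c : Code) (x : ℕ) : ap (Encodable.encode c) x = eval c x := by
  simp [ap]

lemma exists_ap {h : ℕ →. ℕ} (hh : Partrec h) : ∃ e : ℕ, ∀ x, ap e x = h x := by
  obtain ⟨c, hc⟩ := exists_code.1 (Partrec.nat_iff.1 hh)
  exact ⟨Encodable.encode c, fun x => by rw [ap_encode', hc]⟩

lemma ap_partrec : Partrec₂ ap :=
  eval_part.comp ((Computable.ofNat Code).comp Computable.fst) Computable.snd

lemma exists_snd_code : ∃ e : ℕ, ∀ n : ℕ, ap e n = Part.some n.unpair.2 :=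
  exists_ap ((Computable.snd.comp Computable.unpair).partrec)

lemma mem_Weih_iff {g : Multifun} {w : ℕ} {A : Set ℕ} :
    A ∈ Weih g w ↔
      ((∃ c ∈ ap w.unpair.1 w.unpair.2.unpair.2, ∃ B ∈ g c,
          ∀ y ∈ B, (ap w.unpair.2.unpair.1 (Nat.pair w.unpair.2.unpair.2 y)).Dom) ∧
        A = {z | ∃ c ∈ ap w.unpair.1 w.unpair.2.unpair.2, ∃ B ∈ g c,
          ∃ y ∈ B, z ∈ ap w.unpair.2.unpair.1 (Nat.pair w.unpair.2.unpair.2 y)}) := by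
  constructor
  · rintro ⟨h, rfl⟩; exact ⟨h, rfl⟩
  · rintro ⟨h, rfl⟩; exact ⟨h, rfl⟩

lemma mem_Weih_iff' {g : Multifun} {h k x : ℕ} {A : Set ℕ} :
    A ∈ Weih g (Nat.pair h (Nat.pair k x)) ↔
      ((∃ c ∈ ap h x, ∃ B ∈ g c, ∀ y ∈ B, (ap k (Nat.pair x y)).Dom) ∧
        A = {z | ∃ c ∈ ap h x, ∃ B ∈ g c, ∃ y ∈ B, z ∈ ap k (Nat.pair x y)}) := by
  rw [mem_Weih_iff]; simp [Nat.unpair_pair]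

lemma mRed_wRed {f g : Multifun} (h : mRed f g) : wRed f g := by
  obtain ⟨e, he⟩ := h
  obtain ⟨sndc, hsnd⟩ := exists_snd_code
  refine ⟨e, sndc, fun x A hA => ?_⟩
  obtain ⟨c, hc, B, hB, hBA⟩ := he x A hA
  refine ⟨c, hc, B, hB, fun y hy => ⟨y, ?_, hBA hy⟩⟩
  rw [hsnd]; simp

lemma wRed_mRed {f g : Multifun} (hg : Transparent g) (h : wRed f g) : mRed f g := by
  obtain ⟨u, hu⟩ := hg
  obtain ⟨em, ep, hw⟩ := h
  set cp : Code := Denumerable.ofNat Code ep with hcp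
  set s : ℕ → ℕ := fun x => Encodable.encode (curry cp x) with hs
  have hsap : ∀ x y, ap (s x) y = ap ep (Nat.pair x y) := by
    intro x y
    rw [hs]
    rw [ap_encode', eval_curry]
    rfl
  have hscomp : Computable s := by
    have : Primrec s := Primrec.encode.comp (primrec₂_curry.comp (Primrec.const cp) Primrec.id)
    exact this.to_comp
  have hH : Partrec fun x : ℕ => (ap em x).bind fun c => (ap u (s x)).bind fun c' => ap c' c := by
    refine Partrec.bind (ap_partrec.comp (Computable.const em) Computable.id) ?_
    refine Partrec.bind (ap_partrec.comp (Computable.const u) (hscomp.comp Computable.fst)) ?_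
    exact ap_partrec.comp Computable.snd (Computable.snd.comp Computable.fst)
  obtain ⟨E, hE⟩ := exists_ap hH
  refine ⟨E, fun x A hA => ?_⟩
  obtain ⟨c, hc, B, hB, hBA⟩ := hw x A hA
  have hdom : ∀ y ∈ B, (ap (s x) y).Dom := by
    intro y hy
    obtain ⟨z, hz, _⟩ := hBA y hy
    rw [hsap]
    exact Part.dom_iff_mem.2 ⟨z, hz⟩
  obtain ⟨c', hc', d, hd, B', hB', hB'sub⟩ := hu (s x) c B hB hdom
  refine ⟨d, ?_, B', hB', ?_⟩
  · rw [hE]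
    exact Part.mem_bind_iff.2 ⟨c, hc, Part.mem_bind_iff.2 ⟨c', hc', hd⟩⟩
  · intro z hz
    obtain ⟨y, hy, hzy⟩ := hB'sub hz
    obtain ⟨z₀, hz₀, hz₀A⟩ := hBA y hy
    rw [hsap] at hzy
    rwa [Part.mem_unique hzy hz₀]

lemma wRed_Weih (f : Multifun) : wRed f (Weih f) := by
  obtain ⟨idc, hid⟩ := exists_ap (Computable.id.partrec (α := ℕ))
  obtain ⟨sndc, hsnd⟩ := exists_snd_code
  have hemC : Computable fun x : ℕ => Nat.pair idc (Nat.pair sndc x) :=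
    (Primrec₂.natPair.comp (Primrec.const idc)
      (Primrec₂.natPair.comp (Primrec.const sndc) Primrec.id)).to_comp
  obtain ⟨em, hem⟩ := exists_ap hemC.partrec
  refine ⟨em, sndc, fun x A hA => ?_⟩
  refine ⟨Nat.pair idc (Nat.pair sndc x), by rw [hem]; exact Part.mem_some _, ?_⟩
  refine ⟨_, mem_Weih_iff'.2 ⟨⟨x, by rw [hid]; exact Part.mem_some _, A, hA,
      fun y _ => by rw [hsnd]; trivial⟩, rfl⟩, ?_⟩
  intro y hy
  obtain ⟨c, hc, B, hB, y', hy', hyy'⟩ := hy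
  rw [hid] at hc
  have hcx : c = x := Part.mem_some_iff.1 hc
  subst hcx
  have hBA : B = A := Part.mem_unique hB hA
  subst hBA
  rw [hsnd] at hyy'
  simp only [Nat.unpair_pair] at hyy'
  have : y = y' := Part.mem_some_iff.1 hyy'
  subst this
  refine ⟨y, ?_, hy'⟩
  rw [hsnd]; simp

lemma Weih_wRed (f : Multifun) : wRed (Weih f) f := by
  have hEm : Partrec fun w : ℕ => ap w.unpair.1 w.unpair.2.unpair.2 :=
    ap_partrec.comp (Computable.fst.comp Computable.unpair)
      ((Computable.snd.comp Computable.unpair).comp (Computable.snd.comp Computable.unpair))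
  obtain ⟨em, hem⟩ := exists_ap hEm
  have hEp : Partrec fun p : ℕ =>
      ap p.unpair.1.unpair.2.unpair.1 (Nat.pair p.unpair.1.unpair.2.unpair.2 p.unpair.2) := by
    refine ap_partrec.comp ?_ ?_
    · exact (Computable.fst.comp Computable.unpair).comp
        ((Computable.snd.comp Computable.unpair).comp
          ((Computable.fst.comp Computable.unpair)))
    · exact (Primrec₂.natPair.comp
        (Primrec.snd.comp (Primrec.unpair.comp (Primrec.snd.comp
          (Primrec.unpair.comp (Primrec.fst.comp Primrec.unpair)))))
        (Primrec.snd.comp Primrec.unpair)).to_comp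
  obtain ⟨ep, hep⟩ := exists_ap hEp
  refine ⟨em, ep, fun w A hA => ?_⟩
  obtain ⟨⟨c, hc, B, hB, hdom⟩, rfl⟩ := mem_Weih_iff.1 hA
  refine ⟨c, by rw [hem]; exact hc, B, hB, fun y hy => ?_⟩
  obtain ⟨z, hz⟩ := Part.dom_iff_mem.1 (hdom y hy)
  refine ⟨z, ?_, ⟨c, hc, B, hB, y, hy, hz⟩⟩
  rw [hep]
  simp only [Nat.unpair_pair]
  exact hz

lemma Weih_transparent (f : Multifun) : Transparent (Weih f) := by
  have hK : Partrec fun n : ℕ =>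
      (ap n.unpair.1.unpair.2 n.unpair.2).bind fun v => ap n.unpair.1.unpair.1 v := by
    refine Partrec.bind (ap_partrec.comp
      (Computable.snd.comp (Computable.unpair.comp (Computable.fst.comp Computable.unpair)))
      (Computable.snd.comp Computable.unpair)) ?_
    exact ap_partrec.comp
      ((Computable.fst.comp (Computable.unpair.comp
        (Computable.fst.comp Computable.unpair))).comp Computable.fst) Computable.snd
  obtain ⟨K, hKe⟩ := exists_code.1 (Partrec.nat_iff.1 hK)
  have hk' : ∀ e k p, ap (Encodable.encode (curry K (Nat.pair e k))) p
      = (ap k p).bind fun v => ap e v := by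
    intro e k p
    rw [ap_encode', eval_curry, hKe]
    simp [Nat.unpair_pair]
  have hGC : Computable fun n : ℕ =>
      Nat.pair n.unpair.2.unpair.1
        (Nat.pair (Encodable.encode (curry K
            (Nat.pair n.unpair.1 n.unpair.2.unpair.2.unpair.1)))
          n.unpair.2.unpair.2.unpair.2) := by
    have p21 : Primrec fun n : ℕ => n.unpair.2.unpair.1 :=
      Primrec.fst.comp (Primrec.unpair.comp (Primrec.snd.comp Primrec.unpair))
    have p221 : Primrec fun n : ℕ => n.unpair.2.unpair.2.unpair.1 :=
      Primrec.fst.comp (Primrec.unpair.comp (Primrec.snd.comp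
        (Primrec.unpair.comp (Primrec.snd.comp Primrec.unpair))))
    have p222 : Primrec fun n : ℕ => n.unpair.2.unpair.2.unpair.2 :=
      Primrec.snd.comp (Primrec.unpair.comp (Primrec.snd.comp
        (Primrec.unpair.comp (Primrec.snd.comp Primrec.unpair))))
    have p1 : Primrec fun n : ℕ => n.unpair.1 := Primrec.fst.comp Primrec.unpair
    exact (Primrec₂.natPair.comp p21
      (Primrec₂.natPair.comp
        (Primrec.encode.comp (primrec₂_curry.comp (Primrec.const K)
          (Primrec₂.natPair.comp p1 p221)))
        p222)).to_comp
  obtain ⟨cG, hcG⟩ := exists_code.1 (Partrec.nat_iff.1 hGC.partrec)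
  have huC : Computable fun e : ℕ => Encodable.encode (curry cG e) :=
    (Primrec.encode.comp (primrec₂_curry.comp (Primrec.const cG) Primrec.id)).to_comp
  obtain ⟨u, hu⟩ := exists_ap huC.partrec
  refine ⟨u, fun e w A hA hAe => ?_⟩
  obtain ⟨⟨c0, hc0, B0, hB0, hdom⟩, rfl⟩ := mem_Weih_iff.1 hA
  refine ⟨Encodable.encode (curry cG e), by rw [hu]; exact Part.mem_some _, ?_⟩
  have hdval : ap (Encodable.encode (curry cG e)) w =
      Part.some (Nat.pair w.unpair.1
        (Nat.pair (Encodable.encode (curry K (Nat.pair e w.unpair.2.unpair.1)))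
          w.unpair.2.unpair.2)) := by
    rw [ap_encode', eval_curry, hcG]
    simp [Nat.unpair_pair, PFun.lift]
  refine ⟨Nat.pair w.unpair.1
      (Nat.pair (Encodable.encode (curry K (Nat.pair e w.unpair.2.unpair.1)))
        w.unpair.2.unpair.2), by rw [hdval]; exact Part.mem_some _, ?_⟩
  have memS : ∀ y ∈ B0, ∀ v ∈ ap w.unpair.2.unpair.1 (Nat.pair w.unpair.2.unpair.2 y),
      v ∈ {z | ∃ c ∈ ap w.unpair.1 w.unpair.2.unpair.2, ∃ B ∈ f c,
        ∃ y ∈ B, z ∈ ap w.unpair.2.unpair.1 (Nat.pair w.unpair.2.unpair.2 y)} :=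
    fun y hy v hv => ⟨c0, hc0, B0, hB0, y, hy, hv⟩
  refine ⟨_, mem_Weih_iff'.2 ⟨⟨c0, hc0, B0, hB0, fun y hy => ?_⟩, rfl⟩, ?_⟩
  · rw [hk']
    obtain ⟨v, hv⟩ := Part.dom_iff_mem.1 (hdom y hy)
    obtain ⟨z, hz⟩ := Part.dom_iff_mem.1 (hAe v (memS y hy v hv))
    exact Part.dom_iff_mem.2 ⟨z, Part.mem_bind_iff.2 ⟨v, hv, hz⟩⟩
  · intro z hz
    obtain ⟨c, hc, B, hB, y, hy, hzy⟩ := hz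
    have hcc : c = c0 := Part.mem_unique hc hc0
    subst hcc
    have hBB : B = B0 := Part.mem_unique hB hB0
    subst hBB
    rw [hk'] at hzy
    obtain ⟨v, hv, hzv⟩ := Part.mem_bind_iff.1 hzy
    exact ⟨v, memS y hy v hv, hzv⟩

end Aux

/-- For `g` computably transparent, `f ≤_m g ↔ f ≤_W g`; moreover every
`f` is Weihrauch equivalent to the computably transparent `Weih f`.  Hence the poset of
many-one degrees of computably transparent partial multifunctions is isomorphic to the
Weihrauch degrees. -/
theorem transparent_manyone_eq_weihrauch :
    (∀ f g : Multifun, Transparent g → (mRed f g ↔ wRed f g)) ∧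
    (∀ f : Multifun, Transparent (Weih f) ∧ wRed f (Weih f) ∧ wRed (Weih f) f) := by
  refine ⟨fun f g hg => ⟨mRed_wRed, wRed_mRed hg⟩, fun f => ⟨Weih_transparent f, wRed_Weih f, Weih_wRed f⟩⟩

end KleeneOracle
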